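/- Classical deterministic bit-probe lower bound: if there is a deterministic scheme storing every subset S of size at most n of an m-element universe as an s-bit string, answering membership queries with at most t bit probes (each query function computed by a depth-t decision tree on the stored string), then ∑_{i=0}^{n} binom(m,i) ≤ ∑_{i=0}^{nt} binom(s,i). -/

import Mathlib

inductive BDTree (s : ℕ) where
  | leaf : Bool → BDTree s
  | node : Fin s → BDTree s → BDTree s → BDTree s

def BDTree.eval {s : ℕ} : BDTree s → (Fin s → Bool) → Bool
  | .leaf b, _ => b
  | .node i t₀ t₁, x => if x i then t₁.eval x else t₀.eval x

def BDTree.depth {s : ℕ} : BDTree s → ℕ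
  | .leaf _ => 0
  | .node _ t₀ t₁ => max t₀.depth t₁.depth + 1

open Finset Submodule

/-- The "monomial" indicator function of a set of coordinates. -/
noncomputable def monF (s : ℕ) (T : Finset (Fin s)) : (Fin s → Bool) → ℚ :=
  fun y => if ∀ i ∈ T, y i = true then 1 else 0

/-- Span of monomials of degree at most `d`. -/
noncomputable def spanD (s d : ℕ) : Submodule ℚ ((Fin s → Bool) → ℚ) :=
  Submodule.span ℚ (monF s '' {T | T.card ≤ d})

lemma monF_mul {s : ℕ} (T U : Finset (Fin s)) :
    monF s T * monF s U = monF s (T ∪ U) := by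
  funext y
  simp only [monF, Pi.mul_apply]
  by_cases hT : ∀ i ∈ T, y i = true <;> by_cases hU : ∀ i ∈ U, y i = true
  · rw [if_pos hT, if_pos hU,
      if_pos (fun i hi => (Finset.mem_union.mp hi).elim (hT i) (hU i)), one_mul]
  · rw [if_neg hU, mul_zero, if_neg (fun h => hU fun i hi => h i (Finset.mem_union_right _ hi))]
  · rw [if_neg hT, zero_mul, if_neg (fun h => hT fun i hi => h i (Finset.mem_union_left _ hi))]
  · rw [if_neg hU, mul_zero, if_neg (fun h => hU fun i hi => h i (Finset.mem_union_right _ hi))]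

lemma spanD_mono {s : ℕ} {a b : ℕ} (h : a ≤ b) : spanD s a ≤ spanD s b :=
  Submodule.span_mono (Set.image_mono fun _ hT => le_trans hT h)

lemma monF_mem {s : ℕ} {T : Finset (Fin s)} {d : ℕ} (h : T.card ≤ d) :
    monF s T ∈ spanD s d :=
  Submodule.subset_span ⟨T, h, rfl⟩

lemma spanD_mul {s a b : ℕ} {f g : (Fin s → Bool) → ℚ}
    (hf : f ∈ spanD s a) (hg : g ∈ spanD s b) : f * g ∈ spanD s (a + b) := by
  induction hf using Submodule.span_induction with
  | mem f hf =>
    obtain ⟨T, hT, rfl⟩ := hf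
    induction hg using Submodule.span_induction with
    | mem g hg =>
      obtain ⟨U, hU, rfl⟩ := hg
      rw [monF_mul]
      exact monF_mem (le_trans (Finset.card_union_le T U) (Nat.add_le_add hT hU))
    | zero => simpa using (spanD s (a + b)).zero_mem
    | add g₁ g₂ _ _ h₁ h₂ => simpa [mul_add] using add_mem h₁ h₂
    | smul c g _ h => simpa [mul_smul_comm] using Submodule.smul_mem _ c h
  | zero => simpa using (spanD s (a + b)).zero_mem
  | add f₁ f₂ _ _ h₁ h₂ => simpa [add_mul] using add_mem h₁ h₂
  | smul c f _ h => simpa [smul_mul_assoc] using Submodule.smul_mem _ c h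

lemma monF_empty (s : ℕ) : monF s ∅ = 1 := by
  funext y; simp [monF]

lemma tree_mem {s : ℕ} (tr : BDTree s) :
    (fun y => if tr.eval y then (1:ℚ) else 0) ∈ spanD s tr.depth := by
  induction tr with
  | leaf b =>
    cases b with
    | false =>
      have h : (fun y => if (BDTree.leaf false : BDTree s).eval y then (1:ℚ) else 0) = 0 := by
        funext y; simp [BDTree.eval]
      rw [h]; exact zero_mem _
    | true =>
      have h : (fun y => if (BDTree.leaf true : BDTree s).eval y then (1:ℚ) else 0)
          = monF s ∅ := by
        funext y; simp [BDTree.eval, monF]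
      rw [h]; exact monF_mem (by simp)
  | node i t₀ t₁ ih₀ ih₁ =>
    have key : (fun y => if (BDTree.node i t₀ t₁).eval y then (1:ℚ) else 0)
        = (fun y => if t₀.eval y then (1:ℚ) else 0)
          + monF s {i} * ((fun y => if t₁.eval y then (1:ℚ) else 0)
            - (fun y => if t₀.eval y then (1:ℚ) else 0)) := by
      funext y
      simp only [BDTree.eval, Pi.add_apply, Pi.mul_apply, Pi.sub_apply, monF,
        Finset.mem_singleton, forall_eq]
      by_cases h : y i = true <;> simp [h]
    rw [key, BDTree.depth]
    refine add_mem (spanD_mono ?_ ih₀) ?_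
    · omega
    · have h1 : monF s {i} ∈ spanD s 1 := monF_mem (by simp)
      have h2 : ((fun y => if t₁.eval y then (1:ℚ) else 0)
          - (fun y => if t₀.eval y then (1:ℚ) else 0)) ∈ spanD s (max t₀.depth t₁.depth) :=
        sub_mem (spanD_mono (le_max_right _ _) ih₁) (spanD_mono (le_max_left _ _) ih₀)
      have := spanD_mul h1 h2
      exact spanD_mono (by omega) this

lemma prod_mem_spanD {s m t : ℕ} (e : Fin m → ((Fin s → Bool) → ℚ))
    (he : ∀ q, e q ∈ spanD s t) (A : Finset (Fin m)) :
    (∏ q ∈ A, e q) ∈ spanD s (A.card * t) := by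
  classical
  induction A using Finset.induction with
  | empty =>
    rw [Finset.prod_empty, ← monF_empty s]
    exact monF_mem (by simp)
  | @insert q A hq ih =>
    rw [Finset.prod_insert hq, Finset.card_insert_of_notMem hq]
    have h2 := spanD_mul (he q) ih
    exact spanD_mono (le_of_eq (by ring)) h2

lemma card_subtype_card_le (N k : ℕ) :
    Fintype.card {S : Finset (Fin N) // S.card ≤ k}
      = ∑ i ∈ Finset.range (k + 1), N.choose i := by
  classical
  rw [Fintype.card_subtype]
  have heq : (Finset.univ.filter fun S : Finset (Fin N) => S.card ≤ k)
      = (Finset.range (k + 1)).biUnion (fun i => Finset.powersetCard i Finset.univ) := by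
    ext S
    simp only [Finset.mem_filter, Finset.mem_univ, true_and, Finset.mem_biUnion,
      Finset.mem_range, Finset.mem_powersetCard, Nat.lt_succ_iff]
    constructor
    · intro h; exact ⟨S.card, h, Finset.subset_univ S, rfl⟩
    · rintro ⟨i, hi, -, rfl⟩; exact hi
  rw [heq, Finset.card_biUnion]
  · refine Finset.sum_congr rfl fun i _ => ?_
    rw [Finset.card_powersetCard, Finset.card_univ, Fintype.card_fin]
  · intro i _ j _ hij
    refine Finset.disjoint_left.mpr fun S hSi hSj => hij ?_
    rw [Finset.mem_powersetCard] at hSi hSj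
    rw [← hSi.2, ← hSj.2]

theorem deterministic_bitprobe_tradeoff (m n s t : ℕ)
    (x : {S : Finset (Fin m) // S.card ≤ n} → (Fin s → Bool))
    (tree : Fin m → BDTree s)
    (hdepth : ∀ q, (tree q).depth ≤ t)
    (hcorrect : ∀ S : {S : Finset (Fin m) // S.card ≤ n}, ∀ q : Fin m,
      (tree q).eval (x S) = true ↔ q ∈ S.1) :
    ∑ i ∈ Finset.range (n + 1), m.choose i ≤ ∑ i ∈ Finset.range (n * t + 1), s.choose i := by
  classical
  -- the restriction (evaluation) linear map
  set ρ : ((Fin s → Bool) → ℚ) →ₗ[ℚ] ({S : Finset (Fin m) // S.card ≤ n} → ℚ) := LinearMap.funLeft ℚ ℚ x with hρ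
  -- the triangular family
  set w : {S : Finset (Fin m) // S.card ≤ n} → ({S : Finset (Fin m) // S.card ≤ n} → ℚ) := fun S S' => if S.1 ⊆ S'.1 then 1 else 0 with hw
  -- the spanning family
  set g : {T : Finset (Fin s) // T.card ≤ n * t} → ({S : Finset (Fin m) // S.card ≤ n} → ℚ) := fun T => ρ (monF s T.1) with hg
  -- the indicators of query answers
  set e : Fin m → ((Fin s → Bool) → ℚ) :=
    fun q y => if (tree q).eval y then (1:ℚ) else 0 with he
  -- w S is the image under ρ of the product of indicators
  have hwρ : ∀ S : {S : Finset (Fin m) // S.card ≤ n}, w S = ρ (∏ q ∈ S.1, e q) := by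
    intro S
    funext S'
    have : ρ (∏ q ∈ S.1, e q) S' = ∏ q ∈ S.1, e q (x S') := by
      simp [hρ, LinearMap.funLeft_apply, Finset.prod_apply]
    rw [this]
    have hfac : ∀ q ∈ S.1, e q (x S') = if q ∈ S'.1 then (1:ℚ) else 0 := by
      intro q _
      by_cases hq : q ∈ S'.1
      · simp [he, (hcorrect S' q).mpr hq, hq]
      · have hfalse : ¬ ((tree q).eval (x S') = true) :=
          fun h => hq ((hcorrect S' q).mp h)
        simp [he, hfalse, hq]
    rw [Finset.prod_congr rfl hfac]
    by_cases hsub : S.1 ⊆ S'.1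
    · rw [Finset.prod_eq_one fun q hq => by simp [hsub hq]]
      simp [hw, hsub]
      exact hsub
    · obtain ⟨q, hqS, hqS'⟩ := Finset.not_subset.mp hsub
      rw [Finset.prod_eq_zero hqS (by simp [hqS'])]
      simp [hw, hsub]
      exact hsub
  -- each w S lies in the span of the g T
  have hmem : ∀ S : {S : Finset (Fin m) // S.card ≤ n}, w S ∈ Submodule.span ℚ (Set.range g) := by
    intro S
    have hprod : (∏ q ∈ S.1, e q) ∈ spanD s (n * t) := by
      have := prod_mem_spanD e (fun q => spanD_mono (hdepth q) (tree_mem (tree q))) S.1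
      exact spanD_mono (Nat.mul_le_mul_right t S.2) this
    have hmap : ρ (∏ q ∈ S.1, e q) ∈ Submodule.map ρ (spanD s (n * t)) :=
      Submodule.mem_map_of_mem hprod
    have hle : Submodule.map ρ (spanD s (n * t)) ≤ Submodule.span ℚ (Set.range g) := by
      rw [spanD, Submodule.map_span]
      refine Submodule.span_le.mpr ?_
      rintro _ ⟨_, ⟨T, hT, rfl⟩, rfl⟩
      exact Submodule.subset_span ⟨⟨T, hT⟩, rfl⟩
    rw [hwρ S]
    exact hle hmap
  -- linear independence of the triangular family
  have hlin : LinearIndependent ℚ w := by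
    rw [linearIndependent_iff']
    intro A c hsum q hq
    by_contra hcq
    set B := A.filter (fun S => c S ≠ 0) with hB
    have hBne : B.Nonempty := ⟨q, Finset.mem_filter.mpr ⟨hq, hcq⟩⟩
    obtain ⟨S₀, hS₀B, hmin⟩ := B.exists_min_image (fun S => S.1.card) hBne
    have hS₀A : S₀ ∈ A := (Finset.mem_filter.mp hS₀B).1
    have hc₀ : c S₀ ≠ 0 := (Finset.mem_filter.mp hS₀B).2
    have := congrFun hsum S₀
    rw [Finset.sum_apply] at this
    have hterms : ∑ S ∈ A, (c S • w S) S₀ = c S₀ := by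
      rw [Finset.sum_eq_single_of_mem S₀ hS₀A]
      · simp [hw]
      · intro S hSA hSne
        by_cases hcS : c S = 0
        · simp [hcS]
        · have hSB : S ∈ B := Finset.mem_filter.mpr ⟨hSA, hcS⟩
          have hnsub : ¬ S.1 ⊆ S₀.1 := by
            intro hsub
            have : S.1 = S₀.1 :=
              Finset.eq_of_subset_of_card_le hsub (hmin S hSB)
            exact hSne (Subtype.ext this)
          simp [hw, hnsub]
          exact fun h => absurd h hnsub
    rw [hterms] at this
    exact hc₀ this
  -- card counting via linear algebra
  have hfin : FiniteDimensional ℚ (Submodule.span ℚ (Set.range g)) :=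
    FiniteDimensional.span_of_finite ℚ (Set.finite_range g)
  set W := Submodule.span ℚ (Set.range g)
  have hlin' : LinearIndependent ℚ (fun S : {S : Finset (Fin m) // S.card ≤ n} => (⟨w S, hmem S⟩ : W)) :=
    LinearIndependent.of_comp W.subtype (by exact hlin)
  have h1 : Fintype.card {S : Finset (Fin m) // S.card ≤ n} ≤ Module.finrank ℚ W :=
    hlin'.fintype_card_le_finrank
  have h2 : Module.finrank ℚ W ≤ Fintype.card {T : Finset (Fin s) // T.card ≤ n * t} := by
    have := finrank_range_le_card (R := ℚ) g
    simpa [Set.finrank] using this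
  have := h1.trans h2
  rwa [card_subtype_card_le m n, card_subtype_card_le s (n * t)] at this
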